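/- arXiv:2511.01484 — 2 statements merged into one kernel-verified Lean document; each statement's English description precedes it below -/
import Mathlib

section
/- Let b > 0, m > 0, Ω ≥ 0, and let s be a real number with s > −2. Then ∫_0^∞ x^{s/2} · (2bm/(2bm+Ω))^m · (exp(−x/(2b))/(2b)) · Σ_{k=0}^∞ ((m)_k/(k!)²) · (Ω x/(2b(2bm+Ω)))^k dx = (2bm/(2bm+Ω))^m · (2b)^{s/2} · Γ(s/2 + 1) · Σ_{k=0}^∞ ((s/2 + 1)_k (m)_k/(k!)²) · (Ω/(2bm+Ω))^k, where both series converge and (a)_k = a(a+1)⋯(a+k−1) denotes the Pochhammer rising factorial. -/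
open Real MeasureTheory

/-- The Pochhammer rising factorial `(a)_k = a(a+1)⋯(a+k−1)` for a real number `a`. -/
noncomputable def pochhammer' (a : ℝ) : ℕ → ℝ
  | 0 => 1
  | k + 1 => pochhammer' a k * (a + k)

lemma poch_pos {a : ℝ} (ha : 0 < a) : ∀ k, 0 < pochhammer' a k
  | 0 => one_pos
  | k + 1 => mul_pos (poch_pos ha k) (by positivity)

lemma Gamma_poch {a : ℝ} (ha : 0 < a) : ∀ k : ℕ, Real.Gamma (a + k) = pochhammer' a k * Real.Gamma a
  | 0 => by simp [pochhammer']
  | k + 1 => by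
    have h1 : a + (k + 1 : ℕ) = (a + k) + 1 := by push_cast; ring
    have h2 : a + (k : ℝ) ≠ 0 := by positivity
    rw [h1, Real.Gamma_add_one h2, Gamma_poch ha k, pochhammer']
    ring

lemma integrable_val {p r : ℝ} (hp : -1 < p) (hr : 0 < r) :
    IntegrableOn (fun x : ℝ => x ^ p * Real.exp (-x / r)) (Set.Ioi 0) := by
  have h := integrableOn_rpow_mul_exp_neg_mul_rpow hp one_pos (show (0:ℝ) < 1/r by positivity)
  have heq : (fun x : ℝ => x ^ p * Real.exp (-(1/r) * x ^ (1:ℝ)))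
      = fun x : ℝ => x ^ p * Real.exp (-x / r) := by
    funext x
    rw [rpow_one]
    congr 1
    ring
  rwa [heq] at h

lemma integral_val {p r : ℝ} (hp : -1 < p) (hr : 0 < r) :
    ∫ x in Set.Ioi (0:ℝ), x ^ p * Real.exp (-x / r) = r ^ (p + 1) * Real.Gamma (p + 1) := by
  have h := integral_rpow_mul_exp_neg_mul_Ioi (a := p + 1) (r := 1/r)
    (by linarith) (by positivity)
  rw [show (1:ℝ)/(1/r) = r by rw [one_div_one_div]] at h
  rw [← h]
  apply setIntegral_congr_fun measurableSet_Ioi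
  intro x _
  rw [add_sub_cancel_right]
  congr 1
  ring


lemma ratio_eq {g : ℕ → ℝ} (hpos : ∀ k, 0 < g k) (r : ℕ → ℝ)
    (hr : ∀ k, g (k + 1) = g k * r k) :
    (fun k => ‖g (k + 1)‖ / ‖g k‖) = r := by
  funext k
  rw [Real.norm_eq_abs, Real.norm_eq_abs, abs_of_pos (hpos _), abs_of_pos (hpos _), hr,
    mul_comm, mul_div_assoc, div_self (hpos k).ne', mul_one]

lemma summableA {m : ℝ} (hm : 0 < m) {t : ℝ} (ht : 0 ≤ t) :
    Summable fun k : ℕ => (pochhammer' m k / ((k.factorial : ℝ)) ^ 2) * t ^ k := by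
  rcases ht.eq_or_lt with h | ht
  · apply summable_of_ne_finset_zero (s := {0})
    intro k hk
    simp only [Finset.mem_singleton] at hk
    rw [← h, zero_pow hk, mul_zero]
  · set f : ℕ → ℝ := fun k => (pochhammer' m k / ((k.factorial : ℝ)) ^ 2) * t ^ k with hf
    have hfac : ∀ k : ℕ, (0:ℝ) < (k.factorial : ℝ) := fun k => by
      exact_mod_cast k.factorial_pos
    have hpos : ∀ k, 0 < f k := fun k => by
      have h1 := poch_pos hm k
      have h2 := hfac k
      positivity
    have hratio : ∀ k, f (k + 1) = f k * ((m + k) * t / (k + 1) ^ 2) := by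
      intro k
      have h2 := (hfac k).ne'
      have h3 : ((k:ℝ) + 1) ≠ 0 := by positivity
      simp only [hf, pochhammer', Nat.factorial_succ, pow_succ]
      push_cast
      field_simp
    apply summable_of_ratio_test_tendsto_lt_one (l := 0) one_pos
      (Filter.Eventually.of_forall fun k => (hpos k).ne')
    rw [ratio_eq hpos _ hratio]
    apply squeeze_zero (fun k => by positivity)
      (g := fun k : ℕ => (m + 1) * t * (1 / ((k:ℝ) + 1)))
    · intro k
      have hk1 : (0:ℝ) < (k:ℝ) + 1 := by positivity
      have hk : (0:ℝ) ≤ (k:ℝ) := Nat.cast_nonneg k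
      have key : (m + (k:ℝ)) * t ≤ (m + 1) * t * ((k:ℝ) + 1) := by nlinarith [mul_nonneg ht.le (mul_nonneg hm.le hk)]
      calc (m + (k:ℝ)) * t / ((k:ℝ) + 1) ^ 2
          ≤ (m + 1) * t * ((k:ℝ) + 1) / ((k:ℝ) + 1) ^ 2 := by gcongr
        _ = (m + 1) * t * (1 / ((k:ℝ) + 1)) := by field_simp
    · simpa using tendsto_one_div_add_atTop_nhds_zero_nat.const_mul ((m + 1) * t)

lemma summableB {a m : ℝ} (ha : 0 < a) (hm : 0 < m) {q : ℝ} (hq0 : 0 ≤ q) (hq1 : q < 1) :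
    Summable fun k : ℕ =>
      (pochhammer' a k * pochhammer' m k / ((k.factorial : ℝ)) ^ 2) * q ^ k := by
  rcases hq0.eq_or_lt with h | hq
  · apply summable_of_ne_finset_zero (s := {0})
    intro k hk
    simp only [Finset.mem_singleton] at hk
    rw [← h, zero_pow hk, mul_zero]
  · set f : ℕ → ℝ := fun k =>
      (pochhammer' a k * pochhammer' m k / ((k.factorial : ℝ)) ^ 2) * q ^ k with hf
    have hfac : ∀ k : ℕ, (0:ℝ) < (k.factorial : ℝ) := fun k => by
      exact_mod_cast k.factorial_pos
    have hpos : ∀ k, 0 < f k := fun k => by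
      have h1 := poch_pos ha k
      have h2 := poch_pos hm k
      have h3 := hfac k
      positivity
    have hratio : ∀ k, f (k + 1) =
        f k * (q * ((a - 1) * (1 / ((k:ℝ) + 1)) + 1) * ((m - 1) * (1 / ((k:ℝ) + 1)) + 1)) := by
      intro k
      have h2 := (hfac k).ne'
      have h3 : ((k:ℝ) + 1) ≠ 0 := by positivity
      simp only [hf, pochhammer', Nat.factorial_succ, pow_succ]
      push_cast
      field_simp
      ring
    apply summable_of_ratio_test_tendsto_lt_one (l := q) hq1
      (Filter.Eventually.of_forall fun k => (hpos k).ne')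
    rw [ratio_eq hpos _ hratio]
    have h := tendsto_one_div_add_atTop_nhds_zero_nat (𝕜 := ℝ)
    have T : Filter.Tendsto (fun k : ℕ => q * ((a - 1) * (1 / ((k:ℝ) + 1)) + 1) *
        ((m - 1) * (1 / ((k:ℝ) + 1)) + 1)) Filter.atTop (nhds (q * ((a-1)*0+1) * ((m-1)*0+1))) := by
      exact (tendsto_const_nhds.mul ((h.const_mul (a - 1)).add
        (tendsto_const_nhds (x := (1:ℝ))))).mul
        ((h.const_mul (m - 1)).add (tendsto_const_nhds (x := (1:ℝ))))
    simpa using T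



/-- The `s`-th moment of the shadowed Rician power distribution: for `b > 0`, `m > 0`, `Ω ≥ 0`
and `s > −2`,
`∫_0^∞ x^{s/2} (2bm/(2bm+Ω))^m (e^{−x/(2b)}/(2b)) ₁F₁(m;1;Ωx/(2b(2bm+Ω))) dx
  = (2bm/(2bm+Ω))^m (2b)^{s/2} Γ(s/2+1) ₂F₁(s/2+1, m; 1; Ω/(2bm+Ω))`,
with both hypergeometric series (written out as power series) convergent. -/
theorem shadowed_rician_moment (b m Ωr s : ℝ) (hb : 0 < b) (hm : 0 < m) (hΩ : 0 ≤ Ωr)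
    (hs : -2 < s) :
    (∀ x > (0 : ℝ), Summable fun k : ℕ =>
        (pochhammer' m k / ((k.factorial : ℝ)) ^ 2) *
          (Ωr * x / (2 * b * (2 * b * m + Ωr))) ^ k) ∧
    (Summable fun k : ℕ =>
        (pochhammer' (s / 2 + 1) k * pochhammer' m k / ((k.factorial : ℝ)) ^ 2) *
          (Ωr / (2 * b * m + Ωr)) ^ k) ∧
    ∫ x in Set.Ioi (0 : ℝ),
        x ^ (s / 2) * ((2 * b * m / (2 * b * m + Ωr)) ^ m * (Real.exp (-x / (2 * b)) / (2 * b)) *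
          ∑' k : ℕ, (pochhammer' m k / ((k.factorial : ℝ)) ^ 2) *
            (Ωr * x / (2 * b * (2 * b * m + Ωr))) ^ k) =
      (2 * b * m / (2 * b * m + Ωr)) ^ m * (2 * b) ^ (s / 2) * Real.Gamma (s / 2 + 1) *
        ∑' k : ℕ, (pochhammer' (s / 2 + 1) k * pochhammer' m k / ((k.factorial : ℝ)) ^ 2) *
          (Ωr / (2 * b * m + Ωr)) ^ k := by
  have hb2 : (0:ℝ) < 2 * b := by linarith
  have hD : (0:ℝ) < 2 * b * m + Ωr := by positivity
  have ha : (0:ℝ) < s / 2 + 1 := by linarith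
  have hq0 : (0:ℝ) ≤ Ωr / (2 * b * m + Ωr) := by positivity
  have hq1 : Ωr / (2 * b * m + Ωr) < 1 := by
    rw [div_lt_one hD]
    nlinarith
  have hfac : ∀ k : ℕ, (0:ℝ) < (k.factorial : ℝ) := fun k => by
    exact_mod_cast k.factorial_pos
  refine ⟨fun x hx => summableA hm (by positivity), summableB ha hm hq0 hq1, ?_⟩
  set A : ℝ := (2 * b * m / (2 * b * m + Ωr)) ^ m with hA
  have hApos : 0 < A := by
    apply rpow_pos_of_pos
    positivity
  set c : ℝ := Ωr / (2 * b * (2 * b * m + Ωr)) with hc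
  have hc0 : 0 ≤ c := by positivity
  have hcq : c * (2 * b) = Ωr / (2 * b * m + Ωr) := by
    rw [hc]
    field_simp
  set F : ℕ → ℝ → ℝ := fun k x =>
    (A / (2 * b) * (pochhammer' m k / ((k.factorial : ℝ)) ^ 2) * c ^ k) *
      (x ^ (s / 2 + (k:ℝ)) * Real.exp (-x / (2 * b))) with hF
  have hKpos : ∀ k : ℕ, 0 ≤ A / (2 * b) * (pochhammer' m k / ((k.factorial : ℝ)) ^ 2) * c ^ k := by
    intro k
    have h1 := poch_pos hm k
    have h2 := hfac k
    positivity
  -- pointwise identity on Ioi 0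
  have hpt : ∀ x ∈ Set.Ioi (0:ℝ),
      x ^ (s / 2) * (A * (Real.exp (-x / (2 * b)) / (2 * b)) *
        ∑' k : ℕ, (pochhammer' m k / ((k.factorial : ℝ)) ^ 2) *
          (Ωr * x / (2 * b * (2 * b * m + Ωr))) ^ k) = ∑' k : ℕ, F k x := by
    intro x hx
    rw [Set.mem_Ioi] at hx
    have h1 : x ^ (s / 2) * (A * (Real.exp (-x / (2 * b)) / (2 * b)) *
        ∑' k : ℕ, (pochhammer' m k / ((k.factorial : ℝ)) ^ 2) *
          (Ωr * x / (2 * b * (2 * b * m + Ωr))) ^ k)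
        = ∑' k : ℕ, (x ^ (s / 2) * (A * (Real.exp (-x / (2 * b)) / (2 * b)))) *
          ((pochhammer' m k / ((k.factorial : ℝ)) ^ 2) *
            (Ωr * x / (2 * b * (2 * b * m + Ωr))) ^ k) := by
      rw [tsum_mul_left]
      ring
    rw [h1]
    apply tsum_congr
    intro k
    have h2 : Ωr * x / (2 * b * (2 * b * m + Ωr)) = c * x := by
      rw [hc]; ring
    rw [h2]
    simp only [hF]
    rw [rpow_add hx, rpow_natCast, mul_pow]
    ring
  rw [setIntegral_congr_fun measurableSet_Ioi hpt]
  -- integrability of each term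
  have hs2 : (-1:ℝ) < s / 2 := by linarith
  have hint : ∀ k : ℕ, IntegrableOn (F k) (Set.Ioi (0:ℝ)) := by
    intro k
    apply Integrable.const_mul
    exact integrable_val (by push_cast; linarith [Nat.cast_nonneg (α := ℝ) k] : (-1:ℝ) < s / 2 + (k:ℝ)) hb2
  -- value of each integral
  have hval : ∀ k : ℕ, ∫ x in Set.Ioi (0:ℝ), F k x =
      (A * (2 * b) ^ (s / 2) * Real.Gamma (s / 2 + 1)) *
        ((pochhammer' (s / 2 + 1) k * pochhammer' m k / ((k.factorial : ℝ)) ^ 2) *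
          (Ωr / (2 * b * m + Ωr)) ^ k) := by
    intro k
    rw [hF]
    simp only
    rw [MeasureTheory.integral_const_mul,
      integral_val (by push_cast; linarith [Nat.cast_nonneg (α := ℝ) k]) hb2]
    have hG : Real.Gamma (s / 2 + (k:ℝ) + 1) = pochhammer' (s / 2 + 1) k * Real.Gamma (s / 2 + 1) := by
      rw [show s / 2 + (k:ℝ) + 1 = (s / 2 + 1) + (k:ℝ) by ring, Gamma_poch ha k]
    rw [hG, show s / 2 + (k:ℝ) + 1 = s / 2 + ((k:ℝ) + 1) by ring, rpow_add hb2, rpow_add hb2,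
      rpow_one, rpow_natCast, ← hcq, mul_pow]
    have hf2 := (hfac k).ne'
    field_simp
    ring
  rw [← MeasureTheory.integral_tsum_of_summable_integral_norm hint ?_]
  · rw [funext hval, tsum_mul_left]
  · have hnormval : ∀ k : ℕ, (∫ x in Set.Ioi (0:ℝ), ‖F k x‖) = ∫ x in Set.Ioi (0:ℝ), F k x := by
      intro k
      apply setIntegral_congr_fun measurableSet_Ioi
      intro x hx
      rw [Set.mem_Ioi] at hx
      have : 0 ≤ F k x := by
        rw [hF]
        simp only
        apply mul_nonneg (hKpos k)
        positivity
      exact abs_of_nonneg this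
    rw [funext fun k => (hnormval k).trans (hval k)]
    exact (summableB ha hm hq0 hq1).mul_left _
end

section
/- Let 0 < q ≤ 1, η > 0, A₀ > 0, and define ξ(φ) = (1 − (1 − q²)·cos²φ)/q² for φ ∈ ℝ. Then ∫_0^{A₀} (η²/(2πq)) · ∫_{−π}^{π} h^{η²ξ(φ) − 1}/A₀^{η²ξ(φ)} dφ dh = 1. -/
open Real MeasureTheory intervalIntegral

lemma hoyt_deriv (q : ℝ) (hq0 : 0 < q) (hq1 : q ≤ 1) (φ : ℝ) :
    HasDerivAt (fun x : ℝ => (1/q) * (x + arctan ((1-q) * Real.sin x * Real.cos x /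
        (q * Real.cos x ^ 2 + Real.sin x ^ 2))))
      (1 / (Real.sin φ ^ 2 + q ^ 2 * Real.cos φ ^ 2)) φ := by
  have hsc := Real.sin_sq_add_cos_sq φ
  set s := Real.sin φ
  set c := Real.cos φ
  have hD : q * c ^ 2 + s ^ 2 > 0 := by
    nlinarith [mul_nonneg (sub_nonneg.2 hq1) (sq_nonneg s)]
  have hN : HasDerivAt (fun x => (1-q) * Real.sin x * Real.cos x)
      ((1-q) * (c ^ 2 - s ^ 2)) φ := by
    have := ((Real.hasDerivAt_sin φ).const_mul (1-q)).mul (Real.hasDerivAt_cos φ)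
    refine this.congr_deriv ?_
    ring
  have hDd : HasDerivAt (fun x => q * Real.cos x ^ 2 + Real.sin x ^ 2)
      (2 * (1-q) * s * c) φ := by
    have h1 := ((Real.hasDerivAt_cos φ).pow 2).const_mul q
    have h2 := (Real.hasDerivAt_sin φ).pow 2
    refine (h1.add h2).congr_deriv ?_
    ring
  have hu : HasDerivAt (fun x => (1-q) * Real.sin x * Real.cos x /
      (q * Real.cos x ^ 2 + Real.sin x ^ 2))
      (((1-q) * (c ^ 2 - s ^ 2) * (q * c ^ 2 + s ^ 2) -
        (1-q) * s * c * (2 * (1-q) * s * c)) / (q * c ^ 2 + s ^ 2) ^ 2) φ :=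
    hN.div hDd hD.ne'
  have := ((hasDerivAt_id φ).add hu.arctan).const_mul (1/q)
  refine this.congr_deriv (Eq.symm ?_)
  have h1 : (1:ℝ) + ((1-q) * s * c / (q * c ^ 2 + s ^ 2)) ^ 2 =
      ((q * c ^ 2 + s ^ 2) ^ 2 + ((1-q) * s * c) ^ 2) / (q * c ^ 2 + s ^ 2) ^ 2 := by
    field_simp
  rw [h1]
  have h2 : (q * c ^ 2 + s ^ 2) ^ 2 + ((1-q) * s * c) ^ 2 > 0 := by positivity
  have h3 : s ^ 2 + q ^ 2 * c ^ 2 > 0 := by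
    nlinarith [mul_nonneg (mul_nonneg hq0.le (sub_nonneg.2 hq1)) (sq_nonneg c),
      mul_pos hq0 hq0]
  rw [one_div_div]
  set D := q * c ^ 2 + s ^ 2
  set K := D ^ 2 + ((1-q) * s * c) ^ 2 with hK
  set M := (1-q) * (c ^ 2 - s ^ 2) * D - (1-q) * s * c * (2 * (1-q) * s * c) with hM
  have e1 : D ^ 2 / K * (M / D ^ 2) = M / K := by
    rw [div_mul_div_comm]
    rw [mul_comm (D^2) M, mul_div_mul_right _ _ (by positivity : D ^ 2 ≠ 0)]
  rw [e1]
  have e2 : 1 / q * (1 + M / K) = (K + M) / (q * K) := by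
    field_simp
  rw [e2, div_eq_div_iff h3.ne' (by positivity : (0:ℝ) < q * K).ne']
  rw [hK, hM]
  linear_combination (-(q*s^2*c^2) - q*s^4 - q^3*c^4 - q^3*s^2*c^2) * hsc

lemma hoyt_pos (q : ℝ) (hq0 : 0 < q) (hq1 : q ≤ 1) (x : ℝ) :
    0 < Real.sin x ^ 2 + q ^ 2 * Real.cos x ^ 2 := by
  have hsc := Real.sin_sq_add_cos_sq x
  have h1 : 0 ≤ (1 - q ^ 2) * Real.sin x ^ 2 :=
    mul_nonneg (by nlinarith) (sq_nonneg _)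
  nlinarith [mul_pos hq0 hq0]

lemma hoyt_trig_integral (q : ℝ) (hq0 : 0 < q) (hq1 : q ≤ 1) :
    ∫ φ in (-π)..π, 1 / (Real.sin φ ^ 2 + q ^ 2 * Real.cos φ ^ 2) = 2 * π / q := by
  have hcont : Continuous fun φ : ℝ => 1 / (Real.sin φ ^ 2 + q ^ 2 * Real.cos φ ^ 2) :=
    continuous_const.div (by continuity) (fun x => (hoyt_pos q hq0 hq1 x).ne')
  rw [intervalIntegral.integral_eq_sub_of_hasDerivAt
    (fun x _ => hoyt_deriv q hq0 hq1 x) (hcont.intervalIntegrable (-π) π)]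
  simp [Real.sin_pi]
  field_simp
  ring

lemma hoyt_h_integral (A₀ e : ℝ) (hA : 0 < A₀) (he : 0 < e) :
    ∫ h in (0:ℝ)..A₀, h ^ (e - 1) / A₀ ^ e = 1 / e := by
  rw [intervalIntegral.integral_div, integral_rpow (Or.inl (by linarith)),
    sub_add_cancel, Real.zero_rpow he.ne', sub_zero, div_div, mul_comm, ← div_div,
    div_self (Real.rpow_pos_of_pos hA e).ne']

/-- The generalized (Hoyt) pointing-error density
`f(h) = (η²/(2πq)) ∫_{−π}^{π} h^{η²ξ(φ)−1}/A₀^{η²ξ(φ)} dφ`, with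
`ξ(φ) = (1 − (1 − q²)cos²φ)/q²`, integrates to one over `(0, A₀)`. -/
theorem hoyt_pointing_error_density_integrates_to_one
    (q η A₀ : ℝ) (hq0 : 0 < q) (hq1 : q ≤ 1) (hη : 0 < η) (hA : 0 < A₀)
    (ξ : ℝ → ℝ) (hξ : ∀ φ, ξ φ = (1 - (1 - q ^ 2) * Real.cos φ ^ 2) / q ^ 2) :
    ∫ h in (0 : ℝ)..A₀, (η ^ 2 / (2 * π * q)) *
        ∫ φ in (-π)..π, h ^ (η ^ 2 * ξ φ - 1) / A₀ ^ (η ^ 2 * ξ φ) = 1 := by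
  have hπ : (-π) ≤ π := by linarith [Real.pi_pos]
  have hq2 : (0:ℝ) < q ^ 2 := by positivity
  have hη2 : (0:ℝ) < η ^ 2 := by positivity
  have hξ1 : ∀ φ, 1 ≤ ξ φ := by
    intro φ
    rw [hξ φ, le_div_iff₀ hq2]
    nlinarith [Real.cos_sq_le_one φ,
      mul_nonneg (by nlinarith : (0:ℝ) ≤ 1 - q ^ 2)
        (by nlinarith [Real.cos_sq_le_one φ] : (0:ℝ) ≤ 1 - Real.cos φ ^ 2)]
  have he_pos : ∀ φ, 0 < η ^ 2 * ξ φ :=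
    fun φ => mul_pos hη2 (lt_of_lt_of_le one_pos (hξ1 φ))
  have he_ge : ∀ φ, η ^ 2 ≤ η ^ 2 * ξ φ :=
    fun φ => le_mul_of_one_le_right hη2.le (hξ1 φ)
  have hξcont : Continuous ξ := by
    have : ξ = fun φ => (1 - (1 - q ^ 2) * Real.cos φ ^ 2) / q ^ 2 := funext hξ
    rw [this]; fun_prop
  set μ := volume.restrict (Set.Ioc (0:ℝ) A₀) with hμ
  set ν := volume.restrict (Set.Ioc (-π) π) with hν
  have hecont : Continuous fun p : ℝ × ℝ => η ^ 2 * ξ p.2 :=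
    continuous_const.mul (hξcont.comp continuous_snd)
  -- integrability of the uncurried integrand
  have hmeas : AEStronglyMeasurable
      (Function.uncurry fun h φ : ℝ => h ^ (η ^ 2 * ξ φ - 1) / A₀ ^ (η ^ 2 * ξ φ))
      (μ.prod ν) := by
    have hG : Measurable fun p : ℝ × ℝ =>
        Real.exp (Real.log p.1 * (η ^ 2 * ξ p.2 - 1)) / A₀ ^ (η ^ 2 * ξ p.2) := by
      apply Measurable.div
      · exact ((Real.measurable_log.comp measurable_fst).mul
          ((hecont.sub continuous_const).measurable)).exp
      · exact (continuous_const.rpow hecont fun _ => Or.inl hA.ne').measurable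
    refine hG.aestronglyMeasurable.congr ?_
    rw [hμ, hν, Measure.prod_restrict]
    filter_upwards [ae_restrict_mem (measurableSet_Ioc.prod measurableSet_Ioc)] with p hp
    simp only [Function.uncurry]
    rw [Real.rpow_def_of_pos hp.1.1]
  have hgprod : Integrable
      (fun p : ℝ × ℝ => (p.1 ^ (η ^ 2 - 1) / A₀ ^ (η ^ 2)) * 1) (μ.prod ν) := by
    exact Integrable.mul_prod
      (f := fun h : ℝ => h ^ (η ^ 2 - 1) / A₀ ^ (η ^ 2)) (g := fun _ : ℝ => (1:ℝ))
      (((intervalIntegrable_rpow' (by linarith : (-1:ℝ) < η ^ 2 - 1)).1).div_const _)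
      (integrableOn_const measure_Ioc_lt_top.ne)
  have hbound : ∀ᵐ p ∂(μ.prod ν),
      ‖Function.uncurry (fun h φ : ℝ => h ^ (η ^ 2 * ξ φ - 1) / A₀ ^ (η ^ 2 * ξ φ)) p‖ ≤
        p.1 ^ (η ^ 2 - 1) / A₀ ^ (η ^ 2) * 1 := by
    rw [hμ, hν, Measure.prod_restrict]
    filter_upwards [ae_restrict_mem (measurableSet_Ioc.prod measurableSet_Ioc)] with p hp
    obtain ⟨⟨h0, hA'⟩, -⟩ := hp
    simp only [Function.uncurry, mul_one]
    have hF0 : (0:ℝ) ≤ p.1 ^ (η ^ 2 * ξ p.2 - 1) / A₀ ^ (η ^ 2 * ξ p.2) :=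
      le_of_lt (div_pos (Real.rpow_pos_of_pos h0 _) (Real.rpow_pos_of_pos hA _))
    rw [Real.norm_eq_abs, abs_of_nonneg hF0]
    have h1 : p.1 ^ (η ^ 2 * ξ p.2 - 1) / A₀ ^ (η ^ 2 * ξ p.2) =
        (p.1 ^ (η ^ 2 - 1) / A₀ ^ (η ^ 2)) *
          (p.1 ^ (η ^ 2 * ξ p.2 - η ^ 2) / A₀ ^ (η ^ 2 * ξ p.2 - η ^ 2)) := by
      rw [div_mul_div_comm, ← Real.rpow_add h0, ← Real.rpow_add hA,
        show η ^ 2 - 1 + (η ^ 2 * ξ p.2 - η ^ 2) = η ^ 2 * ξ p.2 - 1 by ring,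
        show η ^ 2 + (η ^ 2 * ξ p.2 - η ^ 2) = η ^ 2 * ξ p.2 by ring]
    rw [h1]
    apply mul_le_of_le_one_right (by positivity)
    rw [div_le_one (Real.rpow_pos_of_pos hA _)]
    exact Real.rpow_le_rpow h0.le hA' (by linarith [he_ge p.2])
  have hFint : Integrable
      (Function.uncurry fun h φ : ℝ => h ^ (η ^ 2 * ξ φ - 1) / A₀ ^ (η ^ 2 * ξ φ))
      (μ.prod ν) := hgprod.mono' hmeas hbound
  rw [intervalIntegral.integral_const_mul]
  have hswap : (∫ h in (0:ℝ)..A₀, ∫ φ in (-π)..π,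
        h ^ (η ^ 2 * ξ φ - 1) / A₀ ^ (η ^ 2 * ξ φ)) =
      ∫ φ in (-π)..π, ∫ h in (0:ℝ)..A₀, h ^ (η ^ 2 * ξ φ - 1) / A₀ ^ (η ^ 2 * ξ φ) := by
    simp only [intervalIntegral.integral_of_le hA.le, intervalIntegral.integral_of_le hπ]
    exact MeasureTheory.integral_integral_swap hFint
  rw [hswap]
  have hinner : ∀ φ : ℝ, (∫ h in (0:ℝ)..A₀,
      h ^ (η ^ 2 * ξ φ - 1) / A₀ ^ (η ^ 2 * ξ φ)) = 1 / (η ^ 2 * ξ φ) :=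
    fun φ => hoyt_h_integral A₀ _ hA (he_pos φ)
  simp only [hinner]
  have hpt : ∀ φ : ℝ, 1 / (η ^ 2 * ξ φ) =
      (q ^ 2 / η ^ 2) * (1 / (Real.sin φ ^ 2 + q ^ 2 * Real.cos φ ^ 2)) := by
    intro φ
    have hd := hoyt_pos q hq0 hq1 φ
    have hden : 1 - (1 - q ^ 2) * Real.cos φ ^ 2 =
        Real.sin φ ^ 2 + q ^ 2 * Real.cos φ ^ 2 := by
      linear_combination -Real.sin_sq_add_cos_sq φ
    rw [hξ φ, hden]
    field_simp
  simp only [hpt]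
  rw [intervalIntegral.integral_const_mul, hoyt_trig_integral q hq0 hq1]
  field_simp
end
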